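/- Let $k$ be a field of characteristic zero, $n \ge 3$, $S = k[x_0, \ldots, x_n]$, and $I = (x_0^2, x_0 x_1, x_1^2, x_0 x_2)$. Then the degree-zero graded piece of $\mathrm{Hom}_S(I/I^2, S/I)$ has dimension $8n - 12$ over $k$. -/

import Mathlib

open MvPolynomial

/-- The degree-zero part of `Hom_S(I, S/I)` (which is identified with
`Hom_S(I/I², S/I)`, since any `S`-linear map `I → S/I` kills `I²`): the `k`-submodule of
`S`-linear maps `φ : I → S/I` sending every homogeneous element of `I` of degree `m` into
the degree-`m` graded piece of `S/I`. -/
def degreeZeroHoms (k : Type*) [Field k] (σ : Type*)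
    (I : Ideal (MvPolynomial σ k)) :
    Submodule k ((↥I) →ₗ[MvPolynomial σ k] (MvPolynomial σ k ⧸ I)) where
  carrier := {φ | ∀ (m : ℕ) (p : MvPolynomial σ k) (hp : p ∈ I),
      p ∈ homogeneousSubmodule σ k m →
      φ ⟨p, hp⟩ ∈ (homogeneousSubmodule σ k m).map (Ideal.Quotient.mkₐ k I).toLinearMap}
  add_mem' := by
    intro a b ha hb m p hp hhom
    simpa using add_mem (ha m p hp hhom) (hb m p hp hhom)
  zero_mem' := by
    intro m p hp hhom
    simp
  smul_mem' := by
    intro c a ha m p hp hhom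
    simpa using Submodule.smul_mem _ c (ha m p hp hhom)

attribute [-simp] Fin.val_eq_zero_iff

namespace Stmt8

variable {k : Type*} [Field k] {m : ℕ}

abbrev SS (k : Type*) [Field k] (m : ℕ) := MvPolynomial (Fin (m+4)) k

def v0 (m : ℕ) : Fin (m+4) := ⟨0, by omega⟩
def v1 (m : ℕ) : Fin (m+4) := ⟨1, by omega⟩
def v2 (m : ℕ) : Fin (m+4) := ⟨2, by omega⟩

noncomputable def E {m : ℕ} (j : Fin (m+4)) : Fin (m+4) →₀ ℕ := Finsupp.single j 1

noncomputable def q4 (m : ℕ) : Fin 4 → (Fin (m+4) →₀ ℕ) :=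
  ![E (v0 m) + E (v0 m), E (v0 m) + E (v1 m), E (v1 m) + E (v1 m), E (v0 m) + E (v2 m)]

noncomputable def f4 (k : Type*) [Field k] (m : ℕ) : Fin 4 → SS k m :=
  ![X (v0 m) * X (v0 m), X (v0 m) * X (v1 m), X (v1 m) * X (v1 m), X (v0 m) * X (v2 m)]

lemma f4_eq_monomial (i : Fin 4) : f4 k m i = monomial (q4 m i) 1 := by
  have hx : ∀ a b : Fin (m+4), (X a : SS k m) * X b = monomial (E a + E b) 1 := by
    intro a b
    rw [show (X a : SS k m) = monomial (E a) 1 from rfl,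
      show (X b : SS k m) = monomial (E b) 1 from rfl, monomial_mul, one_mul]
  fin_cases i <;> simp [f4, q4, hx]

noncomputable def Im (k : Type*) [Field k] (m : ℕ) : Ideal (SS k m) :=
  Ideal.span {f4 k m 0, f4 k m 1, f4 k m 2, f4 k m 3}

lemma f4_mem (i : Fin 4) : f4 k m i ∈ Im k m := by
  apply Ideal.subset_span
  fin_cases i <;> simp

lemma mem_Im_iff {p : SS k m} :
    p ∈ Im k m ↔ ∃ a : Fin 4 → SS k m, p = ∑ i, a i * f4 k m i := by
  constructor
  · intro hp
    rw [Im, Ideal.mem_span_insert] at hp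
    obtain ⟨a0, z1, hz1, rfl⟩ := hp
    rw [Ideal.mem_span_insert] at hz1
    obtain ⟨a1, z2, hz2, rfl⟩ := hz1
    rw [Ideal.mem_span_insert] at hz2
    obtain ⟨a2, z3, hz3, rfl⟩ := hz2
    rw [Ideal.mem_span_singleton] at hz3
    obtain ⟨a3, rfl⟩ := hz3
    exact ⟨![a0, a1, a2, a3], by simp [Fin.sum_univ_four]; ring⟩
  · rintro ⟨a, rfl⟩
    exact Submodule.sum_mem _ fun i _ => Ideal.mul_mem_left _ _ (f4_mem i)

lemma coeff_eq_zero_of_mem {p : SS k m} (hp : p ∈ Im k m) {N : Fin (m+4) →₀ ℕ}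
    (h : ∀ i, ¬ q4 m i ≤ N) : coeff N p = 0 := by
  obtain ⟨a, rfl⟩ := mem_Im_iff.1 hp
  rw [coeff_sum]
  refine Finset.sum_eq_zero fun i _ => ?_
  rw [f4_eq_monomial, coeff_mul_monomial', if_neg (h i)]

lemma X_dvd_sub_aeval (i : Fin (m+4)) (p : SS k m) :
    (X i : SS k m) ∣ p - aeval (Function.update X i 0) p := by
  induction p using MvPolynomial.induction_on with
  | C a => simp [aeval_C, algebraMap_eq]
  | add p q hp hq =>
      have := dvd_add hp hq
      rw [map_add] at *
      convert this using 1
      ring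
  | mul_X p j hp =>
      rcases eq_or_ne j i with rfl | hne
      · rw [map_mul, aeval_X, Function.update_self, mul_zero]
        exact dvd_sub (Dvd.intro_left p rfl) (dvd_zero _)
      · rw [map_mul, aeval_X, Function.update_of_ne hne]
        obtain ⟨c, hc⟩ := hp
        exact ⟨c * X j, by rw [show p * X j - aeval (Function.update X i 0) p * X j
          = (p - aeval (Function.update X i 0) p) * X j by ring, hc]; ring⟩

lemma sub_aeval_mem_span_pair (i j : Fin (m+4)) (p : SS k m) :
    p - aeval (Function.update (Function.update X i 0) j 0) p ∈
      Ideal.span {(X i : SS k m), X j} := by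
  set e := aeval (R := k) (Function.update (Function.update (X : Fin (m+4) → SS k m) i 0) j 0)
  induction p using MvPolynomial.induction_on with
  | C a => simp [e, aeval_C, algebraMap_eq]
  | add p q hp hq =>
      have := Submodule.add_mem _ hp hq
      rw [map_add]
      convert this using 1
      ring
  | mul_X p l hp =>
      rcases eq_or_ne l j with rfl | hnj
      · rw [map_mul, aeval_X, Function.update_self, mul_zero, sub_zero]
        exact Ideal.mul_mem_left _ _ (Ideal.subset_span (by simp))
      rcases eq_or_ne l i with rfl | hni
      · rw [map_mul, aeval_X, Function.update_of_ne hnj, Function.update_self, mul_zero, sub_zero]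
        exact Ideal.mul_mem_left _ _ (Ideal.subset_span (by simp))
      · rw [map_mul, aeval_X, Function.update_of_ne hnj, Function.update_of_ne hni]
        have : p * X l - e p * X l = (p - e p) * X l := by ring
        rw [this]
        exact Ideal.mul_mem_right _ _ hp

lemma v1_ne_v0 : v1 m ≠ v0 m := by simp [v0, v1, Fin.ext_iff]
lemma v2_ne_v0 : v2 m ≠ v0 m := by simp [v0, v2, Fin.ext_iff]
lemma v2_ne_v1 : v2 m ≠ v1 m := by simp [v1, v2, Fin.ext_iff]

lemma syzygy {a : Fin 4 → SS k m} (h : ∑ i, a i * f4 k m i = 0) :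
    ∃ w c u v : SS k m,
      a 0 = -(X (v1 m) * w) - X (v2 m) * u ∧
      a 1 = X (v0 m) * w - X (v1 m) * c - X (v2 m) * v ∧
      a 2 = X (v0 m) * c ∧
      a 3 = X (v0 m) * u + X (v1 m) * v := by
  have hsum : a 0 * (X (v0 m) * X (v0 m)) + a 1 * (X (v0 m) * X (v1 m))
      + a 2 * (X (v1 m) * X (v1 m)) + a 3 * (X (v0 m) * X (v2 m)) = 0 := by
    rw [Fin.sum_univ_four] at h
    simpa [f4] using h
  set e0 := aeval (R := k) (Function.update (X : Fin (m+4) → SS k m) (v0 m) 0) with he0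
  have e0X0 : e0 (X (v0 m)) = 0 := by rw [he0, aeval_X, Function.update_self]
  have e0X1 : e0 (X (v1 m)) = X (v1 m) := by rw [he0, aeval_X, Function.update_of_ne v1_ne_v0]
  have e0X2 : e0 (X (v2 m)) = X (v2 m) := by rw [he0, aeval_X, Function.update_of_ne v2_ne_v0]
  -- step 1 : X v0 ∣ a 2
  have h1 : e0 (a 2) * (X (v1 m) * X (v1 m)) = 0 := by
    have := congrArg e0 hsum
    simpa [map_add, map_mul, e0X0, e0X1, e0X2] using this
  have h2 : e0 (a 2) = 0 := by
    rcases mul_eq_zero.1 h1 with h | h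
    · exact h
    · exact absurd h (mul_ne_zero (X_ne_zero _) (X_ne_zero _))
  obtain ⟨c, hc⟩ : (X (v0 m) : SS k m) ∣ a 2 := by
    have := X_dvd_sub_aeval (v0 m) (a 2)
    rwa [← he0, h2, sub_zero] at this
  -- step 2 : cancel one X v0
  have hsum1 : a 0 * X (v0 m) + a 1 * X (v1 m) + c * (X (v1 m) * X (v1 m))
      + a 3 * X (v2 m) = 0 := by
    have hz : X (v0 m) * (a 0 * X (v0 m) + a 1 * X (v1 m) + c * (X (v1 m) * X (v1 m))
        + a 3 * X (v2 m)) = 0 := by linear_combination hsum - (X (v1 m) * X (v1 m)) * hc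
    rcases mul_eq_zero.1 hz with h | h
    · exact absurd h (X_ne_zero _)
    · exact h
  -- step 3 : a 3 ∈ (X v0, X v1)
  set e01 := aeval (R := k)
    (Function.update (Function.update (X : Fin (m+4) → SS k m) (v0 m) 0) (v1 m) 0) with he01
  have e01X0 : e01 (X (v0 m)) = 0 := by
    rw [he01, aeval_X, Function.update_of_ne v1_ne_v0.symm, Function.update_self]
  have e01X1 : e01 (X (v1 m)) = 0 := by rw [he01, aeval_X, Function.update_self]
  have e01X2 : e01 (X (v2 m)) = X (v2 m) := by
    rw [he01, aeval_X, Function.update_of_ne v2_ne_v1, Function.update_of_ne v2_ne_v0]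
  have h3 : e01 (a 3) * X (v2 m) = 0 := by
    have := congrArg e01 hsum1
    simpa [map_add, map_mul, e01X0, e01X1, e01X2] using this
  have h4 : e01 (a 3) = 0 := by
    rcases mul_eq_zero.1 h3 with h | h
    · exact h
    · exact absurd h (X_ne_zero _)
  have h5 : a 3 ∈ Ideal.span {(X (v0 m) : SS k m), X (v1 m)} := by
    have := sub_aeval_mem_span_pair (v0 m) (v1 m) (a 3)
    rwa [← he01, h4, sub_zero] at this
  obtain ⟨u, v, huv⟩ := Ideal.mem_span_pair.1 h5
  -- step 4
  have hsum2 : (a 0 + u * X (v2 m)) * X (v0 m)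
      + (a 1 + c * X (v1 m) + v * X (v2 m)) * X (v1 m) = 0 := by
    linear_combination hsum1 + X (v2 m) * huv
  have h6 : e0 (a 1 + c * X (v1 m) + v * X (v2 m)) * X (v1 m) = 0 := by
    have := congrArg e0 hsum2
    simpa [map_add, map_mul, e0X0, e0X1, e0X2] using this
  have h7 : e0 (a 1 + c * X (v1 m) + v * X (v2 m)) = 0 := by
    rcases mul_eq_zero.1 h6 with h | h
    · exact h
    · exact absurd h (X_ne_zero _)
  obtain ⟨w, hw⟩ : (X (v0 m) : SS k m) ∣ a 1 + c * X (v1 m) + v * X (v2 m) := by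
    have := X_dvd_sub_aeval (v0 m) (a 1 + c * X (v1 m) + v * X (v2 m))
    rwa [← he0, h7, sub_zero] at this
  have hsum3 : X (v0 m) * (a 0 + u * X (v2 m) + w * X (v1 m)) = 0 := by
    linear_combination hsum2 - X (v1 m) * hw
  have h8 : a 0 + u * X (v2 m) + w * X (v1 m) = 0 := by
    rcases mul_eq_zero.1 hsum3 with h | h
    · exact absurd h (X_ne_zero _)
    · exact h
  exact ⟨w, c, u, v, by linear_combination h8, by linear_combination hw,
    by linear_combination hc, by linear_combination -huv⟩

lemma sum_mul_mem_of_rel {H : Fin 4 → SS k m}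
    (R1 : X (v1 m) * H 0 - X (v0 m) * H 1 ∈ Im k m)
    (R2 : X (v1 m) * H 1 - X (v0 m) * H 2 ∈ Im k m)
    (R3 : X (v2 m) * H 0 - X (v0 m) * H 3 ∈ Im k m)
    (R4 : X (v2 m) * H 1 - X (v1 m) * H 3 ∈ Im k m)
    {a : Fin 4 → SS k m} (h : ∑ i, a i * f4 k m i = 0) :
    ∑ i, a i * H i ∈ Im k m := by
  obtain ⟨w, c, u, v, h0, h1, h2, h3⟩ := syzygy h
  have key : ∑ i, a i * H i =
      -(w * (X (v1 m) * H 0 - X (v0 m) * H 1)) - c * (X (v1 m) * H 1 - X (v0 m) * H 2)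
      - u * (X (v2 m) * H 0 - X (v0 m) * H 3) - v * (X (v2 m) * H 1 - X (v1 m) * H 3) := by
    rw [Fin.sum_univ_four, h0, h1, h2, h3]; ring
  rw [key]
  exact Submodule.sub_mem _ (Submodule.sub_mem _ (Submodule.sub_mem _
    (Submodule.neg_mem _ (Ideal.mul_mem_left _ _ R1)) (Ideal.mul_mem_left _ _ R2))
    (Ideal.mul_mem_left _ _ R3)) (Ideal.mul_mem_left _ _ R4)

end Stmt8

namespace Stmt8
variable {k : Type*} [Field k] {m : ℕ}

noncomputable def combo (H : Fin 4 → SS k m) : (Fin 4 → SS k m) →ₗ[SS k m] SS k m where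
  toFun a := ∑ i, a i * H i
  map_add' a b := by simp [add_mul, Finset.sum_add_distrib]
  map_smul' s a := by simp [Finset.mul_sum, smul_eq_mul, mul_assoc]

lemma range_combo_f4 : LinearMap.range (combo (f4 k m)) = Im k m := by
  ext p
  rw [LinearMap.mem_range, mem_Im_iff]
  constructor
  · rintro ⟨a, rfl⟩; exact ⟨a, rfl⟩
  · rintro ⟨a, rfl⟩; exact ⟨a, rfl⟩

noncomputable def psimap (H : Fin 4 → SS k m) :
    (Fin 4 → SS k m) →ₗ[SS k m] SS k m ⧸ Im k m :=
  (Im k m).mkQ.comp (combo H)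

set_option maxHeartbeats 1000000 in
noncomputable def ofQuad (H : Fin 4 → SS k m)
    (hker : LinearMap.ker (combo (f4 k m)) ≤ LinearMap.ker (psimap H)) :
    (↥(Im k m)) →ₗ[SS k m] SS k m ⧸ Im k m :=
  (Submodule.liftQ _ (psimap H) hker) ∘ₗ
    ((LinearMap.quotKerEquivRange (combo (f4 k m))).symm.toLinearMap) ∘ₗ
    (LinearEquiv.ofEq _ _ range_combo_f4.symm).toLinearMap

set_option maxHeartbeats 2000000 in
lemma ofQuad_apply (H : Fin 4 → SS k m) (hker) (a : Fin 4 → SS k m)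
    (hmem : (∑ i, a i * f4 k m i) ∈ Im k m) :
    ofQuad H hker ⟨∑ i, a i * f4 k m i, hmem⟩
      = Ideal.Quotient.mk (Im k m) (∑ i, a i * H i) := by
  have h1 : (LinearEquiv.ofEq _ _ range_combo_f4.symm) ⟨∑ i, a i * f4 k m i, hmem⟩
      = ⟨combo (f4 k m) a, LinearMap.mem_range_self _ a⟩ := rfl
  have h2 : ((combo (f4 k m)).quotKerEquivRange.symm)
      ((LinearEquiv.ofEq _ _ range_combo_f4.symm) ⟨∑ i, a i * f4 k m i, hmem⟩)
      = (LinearMap.ker (combo (f4 k m))).mkQ a := by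
    rw [h1]; exact LinearMap.quotKerEquivRange_symm_apply_image _ a _
  rw [ofQuad, LinearMap.comp_apply, LinearMap.comp_apply, LinearEquiv.coe_toLinearMap,
    LinearEquiv.coe_toLinearMap, h2, Submodule.mkQ_apply, Submodule.liftQ_apply]
  rfl

lemma hom_ext {φ ψ : ↥(Im k m) →ₗ[SS k m] SS k m ⧸ Im k m}
    (h : ∀ i : Fin 4, φ ⟨f4 k m i, f4_mem i⟩ = ψ ⟨f4 k m i, f4_mem i⟩) : φ = ψ := by
  ext ⟨p, hp⟩
  rcases mem_Im_iff.1 hp with ⟨a, ha⟩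
  have hrep : (⟨p, hp⟩ : ↥(Im k m)) = ∑ i, a i • (⟨f4 k m i, f4_mem i⟩ : ↥(Im k m)) := by
    apply Subtype.ext
    simp only [AddSubmonoidClass.coe_finset_sum, SetLike.val_smul, smul_eq_mul]
    exact ha
  rw [hrep, map_sum, map_sum]
  exact Finset.sum_congr rfl fun i _ => by rw [map_smul, map_smul, h i]

lemma degree_E (j : Fin (m+4)) : (E j).degree = 1 := by
  simp [E, Finsupp.degree_apply, Finsupp.support_single_ne_zero]

lemma degree_add (a b : Fin (m+4) →₀ ℕ) : (a + b).degree = a.degree + b.degree := by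
  simp [Finsupp.degree_eq_weight_one, map_add]

lemma degree_q4 (i : Fin 4) : (q4 m i).degree = 2 := by
  fin_cases i <;> simp [q4, degree_add, degree_E]

lemma degree_sub_of_le {s N : Fin (m+4) →₀ ℕ} (h : s ≤ N) :
    (N - s).degree + s.degree = N.degree := by
  rw [← degree_add, tsub_add_cancel_of_le h]

lemma degree_le_of_le {s N : Fin (m+4) →₀ ℕ} (h : s ≤ N) : s.degree ≤ N.degree := by
  rw [← degree_sub_of_le h]; omega

lemma coeff_hc_mul_monomial (a : SS k m) {s : Fin (m+4) →₀ ℕ} (hs : s.degree = 2)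
    {mdeg : ℕ} (hm : 2 ≤ mdeg) (N : Fin (m+4) →₀ ℕ) :
    coeff N ((homogeneousComponent (mdeg - 2) a) * monomial s (1:k))
      = if N.degree = mdeg then coeff N (a * monomial s (1:k)) else 0 := by
  rw [coeff_mul_monomial', coeff_mul_monomial']
  by_cases hle : s ≤ N
  · rw [if_pos hle, if_pos hle, coeff_homogeneousComponent]
    have hd := degree_sub_of_le hle
    by_cases hN : N.degree = mdeg
    · rw [if_pos hN, if_pos (by omega)]
    · rw [if_neg hN, if_neg (by omega), zero_mul]
  · rw [if_neg hle, if_neg hle, ite_self]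

lemma exists_homog_rep {p : SS k m} (hp : p ∈ Im k m) {mdeg : ℕ} (hm : 2 ≤ mdeg)
    (hh : p.IsHomogeneous mdeg) :
    ∃ a : Fin 4 → SS k m, (∀ i, (a i).IsHomogeneous (mdeg - 2))
      ∧ p = ∑ i, a i * f4 k m i := by
  obtain ⟨a, rfl⟩ := mem_Im_iff.1 hp
  refine ⟨fun i => homogeneousComponent (mdeg-2) (a i),
    fun i => homogeneousComponent_isHomogeneous (mdeg-2) (a i), ?_⟩
  apply MvPolynomial.ext
  intro N
  rw [coeff_sum, coeff_sum]
  have hterm : ∀ i : Fin 4,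
      coeff N ((homogeneousComponent (mdeg-2) (a i)) * f4 k m i)
      = if N.degree = mdeg then coeff N (a i * f4 k m i) else 0 := by
    intro i
    rw [f4_eq_monomial i]
    exact coeff_hc_mul_monomial (a i) (degree_q4 i) hm N
  by_cases hN : N.degree = mdeg
  · exact Finset.sum_congr rfl fun i _ => by rw [hterm i, if_pos hN]
  · have hR : (∑ i : Fin 4, coeff N ((homogeneousComponent (mdeg-2) (a i)) * f4 k m i)) = 0 :=
      Finset.sum_eq_zero fun i _ => by rw [hterm i, if_neg hN]
    rw [hR, ← coeff_sum]
    exact hh.coeff_eq_zero hN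

lemma eq_zero_of_low {p : SS k m} (hp : p ∈ Im k m) {mdeg : ℕ} (hm : mdeg < 2)
    (hh : p.IsHomogeneous mdeg) : p = 0 := by
  apply MvPolynomial.ext
  intro N
  rw [coeff_zero]
  by_cases hN : N.degree = mdeg
  · refine coeff_eq_zero_of_mem hp fun i hle => ?_
    have := degree_le_of_le hle
    rw [degree_q4 i] at this
    omega
  · exact hh.coeff_eq_zero hN

end Stmt8

namespace Stmt8
variable {k : Type*} [Field k] {m : ℕ}

abbrev J3 (m : ℕ) := {j : Fin (m+4) // 3 ≤ j.val}
abbrev J2 (m : ℕ) := {j : Fin (m+4) // 2 ≤ j.val}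
abbrev PAR (k : Type*) [Field k] (m : ℕ) := (Fin 4 → J3 m → k) × (Fin 4 → J2 m → k)

noncomputable def sum3 (a : Fin (m+4)) (c : J3 m → k) : SS k m :=
  ∑ j : J3 m, monomial (E a + E j.1) (c j)
noncomputable def sum2 (a : Fin (m+4)) (c : J2 m → k) : SS k m :=
  ∑ j : J2 m, monomial (E a + E j.1) (c j)

noncomputable def hq (p : PAR k m) : Fin 4 → SS k m := fun i =>
  match i with
  | ⟨0, _⟩ => sum3 (v0 m) (p.1 0)
  | ⟨1, _⟩ => sum3 (v0 m) (p.1 1) + sum2 (v1 m) (p.2 0)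
  | ⟨2, _⟩ => sum3 (v0 m) (p.1 2) + sum2 (v1 m) (p.2 1) + sum2 (v2 m) (p.2 2)
  | ⟨3, _⟩ => sum3 (v0 m) (p.1 3) + sum2 (v1 m) (p.2 3) + sum2 (v2 m) (p.2 0)

lemma hq0 (p : PAR k m) : hq p 0 = sum3 (v0 m) (p.1 0) := rfl
lemma hq1 (p : PAR k m) : hq p 1 = sum3 (v0 m) (p.1 1) + sum2 (v1 m) (p.2 0) := rfl
lemma hq2 (p : PAR k m) :
    hq p 2 = sum3 (v0 m) (p.1 2) + sum2 (v1 m) (p.2 1) + sum2 (v2 m) (p.2 2) := rfl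
lemma hq3 (p : PAR k m) :
    hq p 3 = sum3 (v0 m) (p.1 3) + sum2 (v1 m) (p.2 3) + sum2 (v2 m) (p.2 0) := rfl

lemma EE_apply (a b c : Fin (m+4)) :
    (E a + E b) c = (if a = c then 1 else 0) + (if b = c then 1 else 0) := by
  simp [E, Finsupp.single_apply]

lemma E_apply (a c : Fin (m+4)) : (E a) c = if a = c then 1 else 0 := by
  simp [E, Finsupp.single_apply]

lemma not_le_point {s N : Fin (m+4) →₀ ℕ} (pt : Fin (m+4)) (h : N pt < s pt) : ¬ s ≤ N :=
  fun hle => absurd (hle pt) (by omega)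

lemma X_mul_monomial (a : Fin (m+4)) (s : Fin (m+4) →₀ ℕ) (c : k) :
    (X a : SS k m) * monomial s c = monomial (E a + s) c := by
  rw [show (X a : SS k m) = monomial (E a) 1 from rfl, monomial_mul, one_mul]

lemma monomial_mem_Im {N : Fin (m+4) →₀ ℕ} (c : k) (i : Fin 4) (h : q4 m i ≤ N) :
    monomial N c ∈ Im k m := by
  have : monomial N c = monomial (N - q4 m i) c * f4 k m i := by
    rw [f4_eq_monomial, monomial_mul, mul_one, tsub_add_cancel_of_le h]
  rw [this]
  exact Ideal.mul_mem_left _ _ (f4_mem i)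

-- homogeneity
lemma isHomog_sum3 (a : Fin (m+4)) (c : J3 m → k) : (sum3 (k := k) a c).IsHomogeneous 2 :=
  IsHomogeneous.sum _ _ _ fun j _ => isHomogeneous_monomial _ (by rw [degree_add, degree_E, degree_E])
lemma isHomog_sum2 (a : Fin (m+4)) (c : J2 m → k) : (sum2 (k := k) a c).IsHomogeneous 2 :=
  IsHomogeneous.sum _ _ _ fun j _ => isHomogeneous_monomial _ (by rw [degree_add, degree_E, degree_E])

lemma isHomog_hq (p : PAR k m) (i : Fin 4) : (hq p i).IsHomogeneous 2 := by
  fin_cases i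
  · exact isHomog_sum3 _ _
  · exact (isHomog_sum3 _ _).add (isHomog_sum2 _ _)
  · exact ((isHomog_sum3 _ _).add (isHomog_sum2 _ _)).add (isHomog_sum2 _ _)
  · exact ((isHomog_sum3 _ _).add (isHomog_sum2 _ _)).add (isHomog_sum2 _ _)

-- membership of X * sums in Im
lemma X_mul_sum3_mem (a : Fin (m+4)) (c : J3 m → k) (i : Fin 4)
    (h : ∀ j : J3 m, q4 m i ≤ E a + (E (v0 m) + E j.1)) :
    (X a : SS k m) * sum3 (v0 m) c ∈ Im k m := by
  rw [sum3, Finset.mul_sum]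
  exact Submodule.sum_mem _ fun j _ => by
    rw [X_mul_monomial]; exact monomial_mem_Im _ i (h j)

lemma X_mul_sum2_mem (a b : Fin (m+4)) (c : J2 m → k) (i : Fin 4)
    (h : ∀ j : J2 m, q4 m i ≤ E a + (E b + E j.1)) :
    (X a : SS k m) * sum2 b c ∈ Im k m := by
  rw [sum2, Finset.mul_sum]
  exact Submodule.sum_mem _ fun j _ => by
    rw [X_mul_monomial]; exact monomial_mem_Im _ i (h j)

lemma le_self_add_E {s : Fin (m+4) →₀ ℕ} (j : Fin (m+4)) : s ≤ s + E j :=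
  self_le_add_right _ _

lemma rel1 (p : PAR k m) :
    X (v1 m) * hq p 0 - X (v0 m) * hq p 1 ∈ Im k m := by
  apply Submodule.sub_mem
  · -- X v1 * sum3 v0 (a1) : each monomial has x0 x1
    apply X_mul_sum3_mem _ _ 1
    intro j
    intro pt
    simp only [q4, Matrix.cons_val_one, Matrix.cons_val_zero, Matrix.head_cons, Finsupp.add_apply, EE_apply, E_apply]
    split_ifs <;> omega
  · rw [hq1, mul_add]
    apply Submodule.add_mem
    · apply X_mul_sum3_mem _ _ 0
      intro j pt
      simp only [q4, Matrix.cons_val_zero, Finsupp.add_apply, EE_apply, E_apply]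
      split_ifs <;> omega
    · apply X_mul_sum2_mem _ _ _ 1
      intro j pt
      simp only [q4, Matrix.cons_val_one, Matrix.cons_val_zero, Matrix.head_cons, Finsupp.add_apply, EE_apply, E_apply]
      split_ifs <;> omega

end Stmt8

namespace Stmt8
variable {k : Type*} [Field k] {m : ℕ}

lemma swap_sum2 (a b : Fin (m+4)) (c : J2 m → k) :
    (X a : SS k m) * sum2 b c = (X b : SS k m) * sum2 a c := by
  rw [sum2, sum2, Finset.mul_sum, Finset.mul_sum]
  refine Finset.sum_congr rfl fun j _ => ?_
  rw [X_mul_monomial, X_mul_monomial, add_left_comm]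

lemma rel2 (p : PAR k m) :
    X (v1 m) * hq p 1 - X (v0 m) * hq p 2 ∈ Im k m := by
  apply Submodule.sub_mem
  · rw [hq1, mul_add]
    apply Submodule.add_mem
    · apply X_mul_sum3_mem _ _ 1
      intro j pt
      simp only [q4, Matrix.cons_val_one, Matrix.cons_val_zero, Matrix.head_cons, Finsupp.add_apply, EE_apply, E_apply]
      split_ifs <;> omega
    · apply X_mul_sum2_mem _ _ _ 2
      intro j pt
      simp only [q4, Matrix.cons_val_two, Matrix.tail_cons, Matrix.head_cons,
        Finsupp.add_apply, EE_apply, E_apply]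
      split_ifs <;> omega
  · rw [hq2, mul_add, mul_add]
    refine Submodule.add_mem _ (Submodule.add_mem _ ?_ ?_) ?_
    · apply X_mul_sum3_mem _ _ 0
      intro j pt
      simp only [q4, Matrix.cons_val_zero, Finsupp.add_apply, EE_apply, E_apply]
      split_ifs <;> omega
    · apply X_mul_sum2_mem _ _ _ 1
      intro j pt
      simp only [q4, Matrix.cons_val_one, Matrix.cons_val_zero, Matrix.head_cons, Finsupp.add_apply, EE_apply, E_apply]
      split_ifs <;> omega
    · apply X_mul_sum2_mem _ _ _ 3
      intro j pt
      simp only [q4, Matrix.cons_val_three, Matrix.tail_cons, Matrix.head_cons,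
        Finsupp.add_apply, EE_apply, E_apply]
      split_ifs <;> omega

lemma rel3 (p : PAR k m) :
    X (v2 m) * hq p 0 - X (v0 m) * hq p 3 ∈ Im k m := by
  apply Submodule.sub_mem
  · apply X_mul_sum3_mem _ _ 3
    intro j pt
    simp only [q4, Matrix.cons_val_three, Matrix.tail_cons, Matrix.head_cons,
      Finsupp.add_apply, EE_apply, E_apply]
    split_ifs <;> omega
  · rw [hq3, mul_add, mul_add]
    refine Submodule.add_mem _ (Submodule.add_mem _ ?_ ?_) ?_
    · apply X_mul_sum3_mem _ _ 0
      intro j pt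
      simp only [q4, Matrix.cons_val_zero, Finsupp.add_apply, EE_apply, E_apply]
      split_ifs <;> omega
    · apply X_mul_sum2_mem _ _ _ 1
      intro j pt
      simp only [q4, Matrix.cons_val_one, Matrix.cons_val_zero, Matrix.head_cons, Finsupp.add_apply, EE_apply, E_apply]
      split_ifs <;> omega
    · apply X_mul_sum2_mem _ _ _ 3
      intro j pt
      simp only [q4, Matrix.cons_val_three, Matrix.tail_cons, Matrix.head_cons,
        Finsupp.add_apply, EE_apply, E_apply]
      split_ifs <;> omega

lemma rel4 (p : PAR k m) :
    X (v2 m) * hq p 1 - X (v1 m) * hq p 3 ∈ Im k m := by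
  have hswap := swap_sum2 (m := m) (k := k) (v2 m) (v1 m) (p.2 0)
  have key : X (v2 m) * hq p 1 - X (v1 m) * hq p 3
      = X (v2 m) * sum3 (v0 m) (p.1 1) - X (v1 m) * sum3 (v0 m) (p.1 3)
        - X (v1 m) * sum2 (v1 m) (p.2 3) := by
    rw [hq1, hq3]
    linear_combination hswap
  rw [key]
  refine Submodule.sub_mem _ (Submodule.sub_mem _ ?_ ?_) ?_
  · apply X_mul_sum3_mem _ _ 3
    intro j pt
    simp only [q4, Matrix.cons_val_three, Matrix.tail_cons, Matrix.head_cons,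
      Finsupp.add_apply, EE_apply, E_apply]
    split_ifs <;> omega
  · apply X_mul_sum3_mem _ _ 1
    intro j pt
    simp only [q4, Matrix.cons_val_one, Matrix.cons_val_zero, Matrix.head_cons, Finsupp.add_apply, EE_apply, E_apply]
    split_ifs <;> omega
  · apply X_mul_sum2_mem _ _ _ 2
    intro j pt
    simp only [q4, Matrix.cons_val_two, Matrix.tail_cons, Matrix.head_cons,
      Finsupp.add_apply, EE_apply, E_apply]
    split_ifs <;> omega

-- coefficient extraction
lemma E_add_inj {a : Fin (m+4)} {b b' : Fin (m+4)} (h : E a + E b = E a + E b') : b = b' := by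
  have := add_left_cancel h
  exact Finsupp.single_left_injective (one_ne_zero) this

lemma coeff_sum3_self (a : Fin (m+4)) (c : J3 m → k) (j0 : J3 m) :
    coeff (E a + E j0.1) (sum3 a c) = c j0 := by
  rw [sum3, coeff_sum, Finset.sum_eq_single j0]
  · rw [coeff_monomial, if_pos rfl]
  · intro j _ hne
    rw [coeff_monomial, if_neg]
    intro h
    exact hne (Subtype.ext (E_add_inj h))
  · intro h
    exact absurd (Finset.mem_univ j0) h

lemma coeff_sum2_self (a : Fin (m+4)) (c : J2 m → k) (j0 : J2 m) :
    coeff (E a + E j0.1) (sum2 a c) = c j0 := by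
  rw [sum2, coeff_sum, Finset.sum_eq_single j0]
  · rw [coeff_monomial, if_pos rfl]
  · intro j _ hne
    rw [coeff_monomial, if_neg]
    intro h
    exact hne (Subtype.ext (E_add_inj h))
  · intro h
    exact absurd (Finset.mem_univ j0) h

lemma coeff_sum3_base (a : Fin (m+4)) (c : J3 m → k) {N : Fin (m+4) →₀ ℕ} (h : N a = 0) :
    coeff N (sum3 a c) = 0 := by
  rw [sum3, coeff_sum]
  refine Finset.sum_eq_zero fun j _ => ?_
  rw [coeff_monomial, if_neg]
  intro he
  rw [← he, Finsupp.add_apply, E_apply, if_pos rfl] at h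
  omega

lemma coeff_sum2_base (a : Fin (m+4)) (c : J2 m → k) {N : Fin (m+4) →₀ ℕ} (h : N a = 0) :
    coeff N (sum2 a c) = 0 := by
  rw [sum2, coeff_sum]
  refine Finset.sum_eq_zero fun j _ => ?_
  rw [coeff_monomial, if_neg]
  intro he
  rw [← he, Finsupp.add_apply, E_apply, if_pos rfl] at h
  omega

lemma coeff_sum3_out (a : Fin (m+4)) (c : J3 m → k) {N : Fin (m+4) →₀ ℕ} (pt : Fin (m+4))
    (h1 : N pt ≠ 0) (h2 : a ≠ pt) (h3 : ∀ j : J3 m, j.1 ≠ pt) :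
    coeff N (sum3 a c) = 0 := by
  rw [sum3, coeff_sum]
  refine Finset.sum_eq_zero fun j _ => ?_
  rw [coeff_monomial, if_neg]
  intro he
  rw [← he, Finsupp.add_apply, E_apply, E_apply, if_neg h2, if_neg (h3 j)] at h1
  omega

lemma coeff_sum2_out (a : Fin (m+4)) (c : J2 m → k) {N : Fin (m+4) →₀ ℕ} (pt : Fin (m+4))
    (h1 : N pt ≠ 0) (h2 : a ≠ pt) (h3 : ∀ j : J2 m, j.1 ≠ pt) :
    coeff N (sum2 a c) = 0 := by
  rw [sum2, coeff_sum]
  refine Finset.sum_eq_zero fun j _ => ?_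
  rw [coeff_monomial, if_neg]
  intro he
  rw [← he, Finsupp.add_apply, E_apply, E_apply, if_neg h2, if_neg (h3 j)] at h1
  omega

-- non-divisibility of allowed monomials
lemma q4_not_le_03 (j : J3 m) (i : Fin 4) : ¬ q4 m i ≤ E (v0 m) + E j.1 := by
  have hj := j.2
  fin_cases i
  · apply not_le_point (v0 m) <;>
      simp [q4, EE_apply, E_apply, v0, v1, v2, Fin.ext_iff] <;> first | omega | (split_ifs <;> omega)
  · apply not_le_point (v1 m) <;>
      simp [q4, EE_apply, E_apply, v0, v1, v2, Fin.ext_iff] <;> first | omega | (split_ifs <;> omega)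
  · apply not_le_point (v1 m) <;>
      simp [q4, EE_apply, E_apply, v0, v1, v2, Fin.ext_iff] <;> first | omega | (split_ifs <;> omega)
  · apply not_le_point (v2 m) <;>
      simp [q4, EE_apply, E_apply, v0, v1, v2, Fin.ext_iff] <;> first | omega | (split_ifs <;> omega)

lemma q4_not_le_12 (j : J2 m) (i : Fin 4) : ¬ q4 m i ≤ E (v1 m) + E j.1 := by
  have hj := j.2
  fin_cases i
  · apply not_le_point (v0 m) <;>
      simp [q4, EE_apply, E_apply, v0, v1, v2, Fin.ext_iff] <;> first | omega | (split_ifs <;> omega)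
  · apply not_le_point (v0 m) <;>
      simp [q4, EE_apply, E_apply, v0, v1, v2, Fin.ext_iff] <;> first | omega | (split_ifs <;> omega)
  · apply not_le_point (v1 m) <;>
      simp [q4, EE_apply, E_apply, v0, v1, v2, Fin.ext_iff] <;> first | omega | (split_ifs <;> omega)
  · apply not_le_point (v0 m) <;>
      simp [q4, EE_apply, E_apply, v0, v1, v2, Fin.ext_iff] <;> first | omega | (split_ifs <;> omega)

lemma q4_not_le_22 (j : J2 m) (i : Fin 4) : ¬ q4 m i ≤ E (v2 m) + E j.1 := by
  have hj := j.2
  fin_cases i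
  · apply not_le_point (v0 m) <;>
      simp [q4, EE_apply, E_apply, v0, v1, v2, Fin.ext_iff] <;> first | omega | (split_ifs <;> omega)
  · apply not_le_point (v1 m) <;>
      simp [q4, EE_apply, E_apply, v0, v1, v2, Fin.ext_iff] <;> first | omega | (split_ifs <;> omega)
  · apply not_le_point (v1 m) <;>
      simp [q4, EE_apply, E_apply, v0, v1, v2, Fin.ext_iff] <;> first | omega | (split_ifs <;> omega)
  · apply not_le_point (v0 m) <;>
      simp [q4, EE_apply, E_apply, v0, v1, v2, Fin.ext_iff] <;> first | omega | (split_ifs <;> omega)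

end Stmt8

namespace Stmt8
variable {k : Type*} [Field k] {m : ℕ}

lemma classify_deg_two {N : Fin (m+4) →₀ ℕ} (h : N.degree = 2) :
    ∃ a b : Fin (m+4), a.val ≤ b.val ∧ N = E a + E b := by
  classical
  have hc : Multiset.card (Finsupp.toMultiset N) = 2 := by
    rw [Finsupp.card_toMultiset]; exact h
  obtain ⟨x, y, hxy⟩ := Multiset.card_eq_two.1 hc
  have hN : N = E x + E y := by
    have h1 := congrArg Multiset.toFinsupp hxy
    rw [Finsupp.toMultiset_toFinsupp] at h1
    have h2 : Finsupp.toMultiset (E x + E y) = {x, y} := by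
      rw [Finsupp.toMultiset_add, show E x = Finsupp.single x 1 from rfl,
        show E y = Finsupp.single y 1 from rfl, Finsupp.toMultiset_single,
        Finsupp.toMultiset_single, one_smul, one_smul, Multiset.singleton_add]
      rfl
    rw [h1, ← h2, Finsupp.toMultiset_toFinsupp]
  rcases le_total x.val y.val with hle | hle
  · exact ⟨x, y, hle, hN⟩
  · exact ⟨y, x, hle, by rw [hN]; exact add_comm _ _⟩

lemma coeff_from_rel_left {A B : SS k m} {a b : Fin (m+4)}
    (hrel : X a * A - X b * B ∈ Im k m) {N : Fin (m+4) →₀ ℕ}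
    (hndiv : ∀ i, ¬ q4 m i ≤ E a + N) (hb : (E a + N) b = 0) :
    coeff N A = 0 := by
  classical
  have h0 := coeff_eq_zero_of_mem hrel hndiv
  rw [coeff_sub, show (E a + N : Fin (m+4) →₀ ℕ) = Finsupp.single a 1 + N from rfl,
    coeff_X_mul, coeff_X_mul', if_neg (by
      rw [Finsupp.mem_support_iff]
      exact fun hc => hc hb)] at h0
  simpa using h0

lemma coeff_from_rel_right {A B : SS k m} {a b : Fin (m+4)}
    (hrel : X a * A - X b * B ∈ Im k m) {N : Fin (m+4) →₀ ℕ}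
    (hndiv : ∀ i, ¬ q4 m i ≤ E b + N) (ha : (E b + N) a = 0) :
    coeff N B = 0 := by
  classical
  have h0 := coeff_eq_zero_of_mem hrel hndiv
  rw [coeff_sub, coeff_X_mul' , if_neg (by
      rw [Finsupp.mem_support_iff]
      exact fun hc => hc ha),
    show (E b + N : Fin (m+4) →₀ ℕ) = Finsupp.single b 1 + N from rfl, coeff_X_mul] at h0
  exact (sub_eq_zero.1 h0).symm

lemma coeff_from_rel_eq {A B : SS k m} {a b : Fin (m+4)}
    (hrel : X a * A - X b * B ∈ Im k m) {N M : Fin (m+4) →₀ ℕ}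
    (hndiv : ∀ i, ¬ q4 m i ≤ E a + N) (hEq : E a + N = E b + M) :
    coeff N A = coeff M B := by
  have h0 := coeff_eq_zero_of_mem hrel hndiv
  rw [coeff_sub, show (E a + N : Fin (m+4) →₀ ℕ) = Finsupp.single a 1 + N from rfl,
    coeff_X_mul,
    show (Finsupp.single a 1 + N : Fin (m+4) →₀ ℕ) = E a + N from rfl, hEq,
    show (E b + M : Fin (m+4) →₀ ℕ) = Finsupp.single b 1 + M from rfl, coeff_X_mul] at h0
  exact sub_eq_zero.1 h0

lemma mem_Im_of_support {r : SS k m} (h : ∀ N, coeff N r ≠ 0 → ∃ i, N = q4 m i) :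
    r ∈ Im k m := by
  rw [as_sum r]
  refine Submodule.sum_mem _ fun N hNs => ?_
  obtain ⟨i, rfl⟩ := h N (mem_support_iff.1 hNs)
  exact monomial_mem_Im _ i le_rfl

lemma surj0 {H0 H1 H3 : SS k m} (hh0 : H0.IsHomogeneous 2)
    (R1 : X (v1 m) * H0 - X (v0 m) * H1 ∈ Im k m)
    (R3 : X (v2 m) * H0 - X (v0 m) * H3 ∈ Im k m) :
    H0 - sum3 (v0 m) (fun j => coeff (E (v0 m) + E j.1) H0) ∈ Im k m := by
  apply mem_Im_of_support
  intro N hN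
  by_cases hd : N.degree = 2
  case neg =>
    exfalso; apply hN
    rw [coeff_sub, hh0.coeff_eq_zero hd, (isHomog_sum3 _ _).coeff_eq_zero hd, sub_self]
  obtain ⟨a, b, hab, rfl⟩ := classify_deg_two hd
  rcases (show a.val = 0 ∨ a.val = 1 ∨ 2 ≤ a.val by omega) with h0|h1|h2
  · have ha : a = v0 m := Fin.ext h0
    subst ha
    rcases (show b.val = 0 ∨ b.val = 1 ∨ b.val = 2 ∨ 3 ≤ b.val by omega) with hb|hb|hb|hb
    · exact ⟨0, by rw [show b = v0 m from Fin.ext hb]; rfl⟩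
    · exact ⟨1, by rw [show b = v1 m from Fin.ext hb]; rfl⟩
    · exact ⟨3, by rw [show b = v2 m from Fin.ext hb]; rfl⟩
    · exfalso; apply hN
      rw [coeff_sub, coeff_sum3_self (v0 m) _ ⟨b, hb⟩, sub_self]
  · have ha : a = v1 m := Fin.ext h1
    subst ha
    rcases (show b.val = 1 ∨ 2 ≤ b.val by omega) with hb|hb
    · exact ⟨2, by rw [show b = v1 m from Fin.ext hb]; rfl⟩
    · exfalso; apply hN
      have hH : coeff (E (v1 m) + E b) H0 = 0 := by
        apply coeff_from_rel_left R3
        · intro i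
          fin_cases i
          · apply not_le_point (v0 m)
            simp [q4, EE_apply, E_apply, Finsupp.add_apply, v0, v1, v2, Fin.ext_iff] <;>
              first | omega | (split_ifs <;> omega)
          · apply not_le_point (v0 m)
            simp [q4, EE_apply, E_apply, Finsupp.add_apply, v0, v1, v2, Fin.ext_iff] <;>
              first | omega | (split_ifs <;> omega)
          · apply not_le_point (v1 m)
            simp [q4, EE_apply, E_apply, Finsupp.add_apply, v0, v1, v2, Fin.ext_iff] <;>
              first | omega | (split_ifs <;> omega)
          · apply not_le_point (v0 m)
            simp [q4, EE_apply, E_apply, Finsupp.add_apply, v0, v1, v2, Fin.ext_iff] <;>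
              first | omega | (split_ifs <;> omega)
        · simp [Finsupp.add_apply, E_apply, v0, v1, v2, Fin.ext_iff] <;>
            first | omega | (split_ifs <;> omega)
      have hs : coeff (E (v1 m) + E b) (sum3 (v0 m)
          (fun j => coeff (E (v0 m) + E j.1) H0)) = 0 := by
        apply coeff_sum3_base
        simp [Finsupp.add_apply, E_apply, v0, v1, v2, Fin.ext_iff] <;>
          first | omega | (split_ifs <;> omega)
      rw [coeff_sub, hH, hs, sub_self]
  · exfalso; apply hN
    have hH : coeff (E a + E b) H0 = 0 := by
      apply coeff_from_rel_left R1
      · intro i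
        fin_cases i
        · apply not_le_point (v0 m)
          simp [q4, EE_apply, E_apply, Finsupp.add_apply, v0, v1, v2, Fin.ext_iff] <;>
            first | omega | (split_ifs <;> omega)
        · apply not_le_point (v0 m)
          simp [q4, EE_apply, E_apply, Finsupp.add_apply, v0, v1, v2, Fin.ext_iff] <;>
            first | omega | (split_ifs <;> omega)
        · apply not_le_point (v1 m)
          simp [q4, EE_apply, E_apply, Finsupp.add_apply, v0, v1, v2, Fin.ext_iff] <;>
            first | omega | (split_ifs <;> omega)
        · apply not_le_point (v0 m)
          simp [q4, EE_apply, E_apply, Finsupp.add_apply, v0, v1, v2, Fin.ext_iff] <;>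
            first | omega | (split_ifs <;> omega)
      · simp [Finsupp.add_apply, E_apply, v0, v1, v2, Fin.ext_iff] <;>
          first | omega | (split_ifs <;> omega)
    have hs : coeff (E a + E b) (sum3 (v0 m)
        (fun j => coeff (E (v0 m) + E j.1) H0)) = 0 := by
      apply coeff_sum3_base
      simp [Finsupp.add_apply, E_apply, v0, v1, v2, Fin.ext_iff] <;>
        first | omega | (split_ifs <;> omega)
    rw [coeff_sub, hH, hs, sub_self]

end Stmt8

namespace Stmt8
variable {k : Type*} [Field k] {m : ℕ}

lemma ndiv_of_points {N : Fin (m+4) →₀ ℕ} (p0 p1 p2 p3 : Fin (m+4))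
    (h0 : N p0 < q4 m 0 p0) (h1 : N p1 < q4 m 1 p1)
    (h2 : N p2 < q4 m 2 p2) (h3 : N p3 < q4 m 3 p3) : ∀ i, ¬ q4 m i ≤ N := by
  intro i
  fin_cases i
  exacts [not_le_point _ h0, not_le_point _ h1, not_le_point _ h2, not_le_point _ h3]

lemma surj1 {H1 H2 H3 : SS k m} (hh1 : H1.IsHomogeneous 2)
    (R2 : X (v1 m) * H1 - X (v0 m) * H2 ∈ Im k m)
    (R4 : X (v2 m) * H1 - X (v1 m) * H3 ∈ Im k m) :
    H1 - (sum3 (v0 m) (fun j => coeff (E (v0 m) + E j.1) H1)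
      + sum2 (v1 m) (fun j => coeff (E (v2 m) + E j.1) H3)) ∈ Im k m := by
  apply mem_Im_of_support
  intro N hN
  by_cases hd : N.degree = 2
  case neg =>
    exfalso; apply hN
    rw [coeff_sub, hh1.coeff_eq_zero hd,
      ((isHomog_sum3 _ _).add (isHomog_sum2 _ _)).coeff_eq_zero hd, sub_self]
  obtain ⟨a, b, hab, rfl⟩ := classify_deg_two hd
  rcases (show a.val = 0 ∨ a.val = 1 ∨ 2 ≤ a.val by omega) with h0|h1|h2
  · have ha : a = v0 m := Fin.ext h0
    subst ha
    rcases (show b.val = 0 ∨ b.val = 1 ∨ b.val = 2 ∨ 3 ≤ b.val by omega) with hb|hb|hb|hb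
    · exact ⟨0, by rw [show b = v0 m from Fin.ext hb]; rfl⟩
    · exact ⟨1, by rw [show b = v1 m from Fin.ext hb]; rfl⟩
    · exact ⟨3, by rw [show b = v2 m from Fin.ext hb]; rfl⟩
    · exfalso; apply hN
      rw [coeff_sub, coeff_add, coeff_sum3_self (v0 m) _ ⟨b, hb⟩,
        coeff_sum2_base _ _ (by
          simp [Finsupp.add_apply, E_apply, v0, v1, v2, Fin.ext_iff] <;>
            first | omega | (split_ifs <;> omega)), add_zero, sub_self]
  · have ha : a = v1 m := Fin.ext h1
    subst ha
    rcases (show b.val = 1 ∨ 2 ≤ b.val by omega) with hb|hb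
    · exact ⟨2, by rw [show b = v1 m from Fin.ext hb]; rfl⟩
    · exfalso; apply hN
      have hH : coeff (E (v1 m) + E b) H1 = coeff (E (v2 m) + E b) H3 := by
        apply coeff_from_rel_eq R4
        · apply ndiv_of_points (v0 m) (v0 m) (v1 m) (v0 m) <;>
            (simp [q4, EE_apply, E_apply, Finsupp.add_apply, v0, v1, v2, Fin.ext_iff] <;>
              first | omega | (split_ifs <;> omega))
        · exact add_left_comm _ _ _
      rw [coeff_sub, coeff_add, hH,
        coeff_sum3_base _ _ (by
          simp [Finsupp.add_apply, E_apply, v0, v1, v2, Fin.ext_iff] <;>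
            first | omega | (split_ifs <;> omega)),
        coeff_sum2_self (v1 m) _ ⟨b, hb⟩, zero_add, sub_self]
  · exfalso; apply hN
    have hH : coeff (E a + E b) H1 = 0 := by
      apply coeff_from_rel_left R2
      · apply ndiv_of_points (v0 m) (v0 m) (v1 m) (v0 m) <;>
          (simp [q4, EE_apply, E_apply, Finsupp.add_apply, v0, v1, v2, Fin.ext_iff] <;>
            first | omega | (split_ifs <;> omega))
      · simp [Finsupp.add_apply, E_apply, v0, v1, v2, Fin.ext_iff] <;>
          first | omega | (split_ifs <;> omega)
    rw [coeff_sub, coeff_add, hH,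
      coeff_sum3_base _ _ (by
        simp [Finsupp.add_apply, E_apply, v0, v1, v2, Fin.ext_iff] <;>
          first | omega | (split_ifs <;> omega)),
      coeff_sum2_base _ _ (by
        simp [Finsupp.add_apply, E_apply, v0, v1, v2, Fin.ext_iff] <;>
          first | omega | (split_ifs <;> omega)), add_zero, sub_self]

lemma surj2 {H1 H2 : SS k m} (hh2 : H2.IsHomogeneous 2)
    (R2 : X (v1 m) * H1 - X (v0 m) * H2 ∈ Im k m) :
    H2 - (sum3 (v0 m) (fun j => coeff (E (v0 m) + E j.1) H2)
      + sum2 (v1 m) (fun j => coeff (E (v1 m) + E j.1) H2)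
      + sum2 (v2 m) (fun j => coeff (E (v2 m) + E j.1) H2)) ∈ Im k m := by
  apply mem_Im_of_support
  intro N hN
  by_cases hd : N.degree = 2
  case neg =>
    exfalso; apply hN
    rw [coeff_sub, hh2.coeff_eq_zero hd,
      (((isHomog_sum3 _ _).add (isHomog_sum2 _ _)).add (isHomog_sum2 _ _)).coeff_eq_zero hd,
      sub_self]
  obtain ⟨a, b, hab, rfl⟩ := classify_deg_two hd
  rcases (show a.val = 0 ∨ a.val = 1 ∨ a.val = 2 ∨ 3 ≤ a.val by omega) with h0|h1|h2|h3
  · have ha : a = v0 m := Fin.ext h0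
    subst ha
    rcases (show b.val = 0 ∨ b.val = 1 ∨ b.val = 2 ∨ 3 ≤ b.val by omega) with hb|hb|hb|hb
    · exact ⟨0, by rw [show b = v0 m from Fin.ext hb]; rfl⟩
    · exact ⟨1, by rw [show b = v1 m from Fin.ext hb]; rfl⟩
    · exact ⟨3, by rw [show b = v2 m from Fin.ext hb]; rfl⟩
    · exfalso; apply hN
      rw [coeff_sub, coeff_add, coeff_add, coeff_sum3_self (v0 m) _ ⟨b, hb⟩,
        coeff_sum2_base _ _ (by
          simp [Finsupp.add_apply, E_apply, v0, v1, v2, Fin.ext_iff] <;>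
            first | omega | (split_ifs <;> omega)),
        coeff_sum2_base _ _ (by
          simp [Finsupp.add_apply, E_apply, v0, v1, v2, Fin.ext_iff] <;>
            first | omega | (split_ifs <;> omega)), add_zero, add_zero, sub_self]
  · have ha : a = v1 m := Fin.ext h1
    subst ha
    rcases (show b.val = 1 ∨ 2 ≤ b.val by omega) with hb|hb
    · exact ⟨2, by rw [show b = v1 m from Fin.ext hb]; rfl⟩
    · exfalso; apply hN
      rw [coeff_sub, coeff_add, coeff_add,
        coeff_sum3_base _ _ (by
          simp [Finsupp.add_apply, E_apply, v0, v1, v2, Fin.ext_iff] <;>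
            first | omega | (split_ifs <;> omega)),
        coeff_sum2_self (v1 m) _ ⟨b, hb⟩,
        coeff_sum2_out (v2 m) _ (v1 m)
          (by simp [Finsupp.add_apply, E_apply, v0, v1, v2, Fin.ext_iff] <;>
            first | omega | (split_ifs <;> omega))
          (by simp [v1, v2, Fin.ext_iff])
          (fun j => by have := j.2; simp [v1, Fin.ext_iff]; omega),
        zero_add, add_zero, sub_self]
  · have ha : a = v2 m := Fin.ext h2
    subst ha
    exfalso; apply hN
    have hb : 2 ≤ b.val := le_trans (by norm_num [v2]) hab
    rw [coeff_sub, coeff_add, coeff_add,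
      coeff_sum3_base _ _ (by
        simp [Finsupp.add_apply, E_apply, v0, v1, v2, Fin.ext_iff] <;>
          first | omega | (split_ifs <;> omega)),
      coeff_sum2_base (v1 m) _ (by
        simp [Finsupp.add_apply, E_apply, v0, v1, v2, Fin.ext_iff] <;>
          first | omega | (split_ifs <;> omega)),
      coeff_sum2_self (v2 m) _ ⟨b, hb⟩, zero_add, zero_add, sub_self]
  · exfalso; apply hN
    have hbv : 3 ≤ b.val := le_trans h3 hab
    have hH : coeff (E a + E b) H2 = 0 := by
      apply coeff_from_rel_right R2
      · apply ndiv_of_points (v0 m) (v1 m) (v1 m) (v2 m) <;>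
          (simp [q4, EE_apply, E_apply, Finsupp.add_apply, v0, v1, v2, Fin.ext_iff] <;>
            first | omega | (split_ifs <;> omega))
      · simp [Finsupp.add_apply, E_apply, v0, v1, v2, Fin.ext_iff] <;>
          first | omega | (split_ifs <;> omega)
    rw [coeff_sub, coeff_add, coeff_add, hH,
      coeff_sum3_base _ _ (by
        simp [Finsupp.add_apply, E_apply, v0, v1, v2, Fin.ext_iff] <;>
          first | omega | (split_ifs <;> omega)),
      coeff_sum2_base (v1 m) _ (by
        simp [Finsupp.add_apply, E_apply, v0, v1, v2, Fin.ext_iff] <;>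
          first | omega | (split_ifs <;> omega)),
      coeff_sum2_base (v2 m) _ (by
        simp [Finsupp.add_apply, E_apply, v0, v1, v2, Fin.ext_iff] <;>
          first | omega | (split_ifs <;> omega)), add_zero, add_zero, sub_self]

lemma surj3 {H0 H3 : SS k m} (hh3 : H3.IsHomogeneous 2)
    (R3 : X (v2 m) * H0 - X (v0 m) * H3 ∈ Im k m) :
    H3 - (sum3 (v0 m) (fun j => coeff (E (v0 m) + E j.1) H3)
      + sum2 (v1 m) (fun j => coeff (E (v1 m) + E j.1) H3)
      + sum2 (v2 m) (fun j => coeff (E (v2 m) + E j.1) H3)) ∈ Im k m := by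
  apply mem_Im_of_support
  intro N hN
  by_cases hd : N.degree = 2
  case neg =>
    exfalso; apply hN
    rw [coeff_sub, hh3.coeff_eq_zero hd,
      (((isHomog_sum3 _ _).add (isHomog_sum2 _ _)).add (isHomog_sum2 _ _)).coeff_eq_zero hd,
      sub_self]
  obtain ⟨a, b, hab, rfl⟩ := classify_deg_two hd
  rcases (show a.val = 0 ∨ a.val = 1 ∨ a.val = 2 ∨ 3 ≤ a.val by omega) with h0|h1|h2|h3'
  · have ha : a = v0 m := Fin.ext h0
    subst ha
    rcases (show b.val = 0 ∨ b.val = 1 ∨ b.val = 2 ∨ 3 ≤ b.val by omega) with hb|hb|hb|hb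
    · exact ⟨0, by rw [show b = v0 m from Fin.ext hb]; rfl⟩
    · exact ⟨1, by rw [show b = v1 m from Fin.ext hb]; rfl⟩
    · exact ⟨3, by rw [show b = v2 m from Fin.ext hb]; rfl⟩
    · exfalso; apply hN
      rw [coeff_sub, coeff_add, coeff_add, coeff_sum3_self (v0 m) _ ⟨b, hb⟩,
        coeff_sum2_base _ _ (by
          simp [Finsupp.add_apply, E_apply, v0, v1, v2, Fin.ext_iff] <;>
            first | omega | (split_ifs <;> omega)),
        coeff_sum2_base _ _ (by
          simp [Finsupp.add_apply, E_apply, v0, v1, v2, Fin.ext_iff] <;>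
            first | omega | (split_ifs <;> omega)), add_zero, add_zero, sub_self]
  · have ha : a = v1 m := Fin.ext h1
    subst ha
    rcases (show b.val = 1 ∨ 2 ≤ b.val by omega) with hb|hb
    · exact ⟨2, by rw [show b = v1 m from Fin.ext hb]; rfl⟩
    · exfalso; apply hN
      rw [coeff_sub, coeff_add, coeff_add,
        coeff_sum3_base _ _ (by
          simp [Finsupp.add_apply, E_apply, v0, v1, v2, Fin.ext_iff] <;>
            first | omega | (split_ifs <;> omega)),
        coeff_sum2_self (v1 m) _ ⟨b, hb⟩,
        coeff_sum2_out (v2 m) _ (v1 m)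
          (by simp [Finsupp.add_apply, E_apply, v0, v1, v2, Fin.ext_iff] <;>
            first | omega | (split_ifs <;> omega))
          (by simp [v1, v2, Fin.ext_iff])
          (fun j => by have := j.2; simp [v1, Fin.ext_iff]; omega),
        zero_add, add_zero, sub_self]
  · have ha : a = v2 m := Fin.ext h2
    subst ha
    exfalso; apply hN
    have hb : 2 ≤ b.val := le_trans (by norm_num [v2]) hab
    rw [coeff_sub, coeff_add, coeff_add,
      coeff_sum3_base _ _ (by
        simp [Finsupp.add_apply, E_apply, v0, v1, v2, Fin.ext_iff] <;>
          first | omega | (split_ifs <;> omega)),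
      coeff_sum2_base (v1 m) _ (by
        simp [Finsupp.add_apply, E_apply, v0, v1, v2, Fin.ext_iff] <;>
          first | omega | (split_ifs <;> omega)),
      coeff_sum2_self (v2 m) _ ⟨b, hb⟩, zero_add, zero_add, sub_self]
  · exfalso; apply hN
    have hbv : 3 ≤ b.val := le_trans h3' hab
    have hH : coeff (E a + E b) H3 = 0 := by
      apply coeff_from_rel_right R3
      · apply ndiv_of_points (v0 m) (v1 m) (v1 m) (v2 m) <;>
          (simp [q4, EE_apply, E_apply, Finsupp.add_apply, v0, v1, v2, Fin.ext_iff] <;>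
            first | omega | (split_ifs <;> omega))
      · simp [Finsupp.add_apply, E_apply, v0, v1, v2, Fin.ext_iff] <;>
          first | omega | (split_ifs <;> omega)
    rw [coeff_sub, coeff_add, coeff_add, hH,
      coeff_sum3_base _ _ (by
        simp [Finsupp.add_apply, E_apply, v0, v1, v2, Fin.ext_iff] <;>
          first | omega | (split_ifs <;> omega)),
      coeff_sum2_base (v1 m) _ (by
        simp [Finsupp.add_apply, E_apply, v0, v1, v2, Fin.ext_iff] <;>
          first | omega | (split_ifs <;> omega)),
      coeff_sum2_base (v2 m) _ (by
        simp [Finsupp.add_apply, E_apply, v0, v1, v2, Fin.ext_iff] <;>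
          first | omega | (split_ifs <;> omega)), add_zero, add_zero, sub_self]

end Stmt8

namespace Stmt8
variable {k : Type*} [Field k] {m : ℕ}

lemma hker (p : PAR k m) :
    LinearMap.ker (combo (f4 k m)) ≤ LinearMap.ker (psimap (hq p)) := by
  intro a ha
  rw [LinearMap.mem_ker] at ha ⊢
  show (Im k m).mkQ (combo (hq p) a) = 0
  rw [Submodule.mkQ_apply, Submodule.Quotient.mk_eq_zero]
  exact sum_mul_mem_of_rel (rel1 p) (rel2 p) (rel3 p) (rel4 p) ha

noncomputable def XiFun (p : PAR k m) : ↥(Im k m) →ₗ[SS k m] SS k m ⧸ Im k m :=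
  ofQuad (hq p) (hker p)

lemma sum_single_mul (g : Fin 4 → SS k m) (i : Fin 4) :
    ∑ j, (if j = i then (1 : SS k m) else 0) * g j = g i := by
  rw [Fintype.sum_eq_single i]
  · rw [if_pos rfl, one_mul]
  · intro j hj
    rw [if_neg hj, zero_mul]

lemma XiFun_gen (p : PAR k m) (i : Fin 4) :
    XiFun p ⟨f4 k m i, f4_mem i⟩ = Ideal.Quotient.mk (Im k m) (hq p i) := by
  have h1 : (⟨f4 k m i, f4_mem i⟩ : ↥(Im k m))
      = ⟨∑ j, (if j = i then (1 : SS k m) else 0) * f4 k m j,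
          by rw [sum_single_mul]; exact f4_mem i⟩ :=
    Subtype.ext (sum_single_mul (f4 k m) i).symm
  rw [XiFun, h1, ofQuad_apply, sum_single_mul]

-- coefficient lemmas for hq
lemma coeff_hq_03 (p : PAR k m) (i : Fin 4) (j : J3 m) :
    coeff (E (v0 m) + E j.1) (hq p i) = p.1 i j := by
  have hN0 : (E (v0 m) + E j.1) (v0 m) ≠ 0 := by
    have := j.2
    simp [Finsupp.add_apply, E_apply, v0, Fin.ext_iff]
  have hz2 : ∀ (b : Fin (m+4)), b.val ≠ 0 → ∀ c : J2 m → k,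
      coeff (E (v0 m) + E j.1) (sum2 b c) = 0 := by
    intro b hb c
    apply coeff_sum2_out b c (v0 m) hN0
    · simp [v0, Fin.ext_iff]; omega
    · intro j'
      have := j'.2
      simp [v0, Fin.ext_iff]; omega
  fin_cases i
  · show coeff (E (v0 m) + E j.1) (hq p 0) = p.1 0 j
    rw [hq0, coeff_sum3_self]
  · show coeff (E (v0 m) + E j.1) (hq p 1) = p.1 1 j
    rw [hq1, coeff_add, coeff_sum3_self, hz2 _ (by simp [v1]) _, add_zero]
  · show coeff (E (v0 m) + E j.1) (hq p 2) = p.1 2 j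
    rw [hq2, coeff_add, coeff_add, coeff_sum3_self, hz2 _ (by simp [v1]) _,
      hz2 _ (by simp [v2]) _, add_zero, add_zero]
  · show coeff (E (v0 m) + E j.1) (hq p 3) = p.1 3 j
    rw [hq3, coeff_add, coeff_add, coeff_sum3_self, hz2 _ (by simp [v1]) _,
      hz2 _ (by simp [v2]) _, add_zero, add_zero]

lemma base_v0_12 (j : J2 m) : (E (v1 m) + E j.1) (v0 m) = 0 := by
  have := j.2
  simp [Finsupp.add_apply, E_apply, v0, v1, Fin.ext_iff]
  omega

lemma base_v0_22 (j : J2 m) : (E (v2 m) + E j.1) (v0 m) = 0 := by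
  have := j.2
  simp [Finsupp.add_apply, E_apply, v0, v2, Fin.ext_iff]
  omega

lemma base_v1_22 (j : J2 m) : (E (v2 m) + E j.1) (v1 m) = 0 := by
  have := j.2
  simp [Finsupp.add_apply, E_apply, v1, v2, Fin.ext_iff]
  omega

lemma out_v1_12 (j : J2 m) (c : J2 m → k) :
    coeff (E (v1 m) + E j.1) (sum2 (v2 m) c) = 0 := by
  apply coeff_sum2_out (v2 m) c (v1 m)
  · have := j.2
    simp [Finsupp.add_apply, E_apply, v1, v2, Fin.ext_iff]
  · simp [v1, v2, Fin.ext_iff]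
  · intro j'
    have := j'.2
    simp [v1, Fin.ext_iff]; omega

lemma coeff_hq1_12 (p : PAR k m) (j : J2 m) :
    coeff (E (v1 m) + E j.1) (hq p 1) = p.2 0 j := by
  rw [hq1, coeff_add, coeff_sum3_base _ _ (base_v0_12 j), coeff_sum2_self, zero_add]

lemma coeff_hq2_12 (p : PAR k m) (j : J2 m) :
    coeff (E (v1 m) + E j.1) (hq p 2) = p.2 1 j := by
  rw [hq2, coeff_add, coeff_add, coeff_sum3_base _ _ (base_v0_12 j), coeff_sum2_self,
    out_v1_12, zero_add, add_zero]

lemma coeff_hq3_12 (p : PAR k m) (j : J2 m) :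
    coeff (E (v1 m) + E j.1) (hq p 3) = p.2 3 j := by
  rw [hq3, coeff_add, coeff_add, coeff_sum3_base _ _ (base_v0_12 j), coeff_sum2_self,
    out_v1_12, zero_add, add_zero]

lemma coeff_hq2_22 (p : PAR k m) (j : J2 m) :
    coeff (E (v2 m) + E j.1) (hq p 2) = p.2 2 j := by
  rw [hq2, coeff_add, coeff_add, coeff_sum3_base _ _ (base_v0_22 j),
    coeff_sum2_base _ _ (base_v1_22 j), coeff_sum2_self, zero_add, zero_add]

lemma coeff_hq3_22 (p : PAR k m) (j : J2 m) :
    coeff (E (v2 m) + E j.1) (hq p 3) = p.2 0 j := by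
  rw [hq3, coeff_add, coeff_add, coeff_sum3_base _ _ (base_v0_22 j),
    coeff_sum2_base _ _ (base_v1_22 j), coeff_sum2_self, zero_add, zero_add]

-- additivity of hq
lemma sum3_add (a : Fin (m+4)) (c c' : J3 m → k) :
    sum3 (k := k) a (c + c') = sum3 a c + sum3 a c' := by
  rw [sum3, sum3, sum3, ← Finset.sum_add_distrib]
  exact Finset.sum_congr rfl fun j _ => by rw [Pi.add_apply, map_add]

lemma sum2_add (a : Fin (m+4)) (c c' : J2 m → k) :
    sum2 (k := k) a (c + c') = sum2 a c + sum2 a c' := by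
  rw [sum2, sum2, sum2, ← Finset.sum_add_distrib]
  exact Finset.sum_congr rfl fun j _ => by rw [Pi.add_apply, map_add]

lemma sum3_smul (r : k) (a : Fin (m+4)) (c : J3 m → k) :
    sum3 (k := k) a (r • c) = r • sum3 a c := by
  rw [sum3, sum3, Finset.smul_sum]
  exact Finset.sum_congr rfl fun j _ => by rw [Pi.smul_apply, smul_monomial]

lemma sum2_smul (r : k) (a : Fin (m+4)) (c : J2 m → k) :
    sum2 (k := k) a (r • c) = r • sum2 a c := by
  rw [sum2, sum2, Finset.smul_sum]
  exact Finset.sum_congr rfl fun j _ => by rw [Pi.smul_apply, smul_monomial]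

lemma hq_add (p q : PAR k m) (i : Fin 4) : hq (p + q) i = hq p i + hq q i := by
  fin_cases i
  · show sum3 (v0 m) (p.1 0 + q.1 0) = _
    rw [sum3_add]; rfl
  · show sum3 (v0 m) (p.1 1 + q.1 1) + sum2 (v1 m) (p.2 0 + q.2 0) = _
    rw [sum3_add, sum2_add]
    show _ = sum3 (v0 m) (p.1 1) + sum2 (v1 m) (p.2 0)
      + (sum3 (v0 m) (q.1 1) + sum2 (v1 m) (q.2 0))
    ring
  · show sum3 (v0 m) (p.1 2 + q.1 2) + sum2 (v1 m) (p.2 1 + q.2 1)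
      + sum2 (v2 m) (p.2 2 + q.2 2) = _
    rw [sum3_add, sum2_add, sum2_add]
    show _ = sum3 (v0 m) (p.1 2) + sum2 (v1 m) (p.2 1) + sum2 (v2 m) (p.2 2)
      + (sum3 (v0 m) (q.1 2) + sum2 (v1 m) (q.2 1) + sum2 (v2 m) (q.2 2))
    ring
  · show sum3 (v0 m) (p.1 3 + q.1 3) + sum2 (v1 m) (p.2 3 + q.2 3)
      + sum2 (v2 m) (p.2 0 + q.2 0) = _
    rw [sum3_add, sum2_add, sum2_add]
    show _ = sum3 (v0 m) (p.1 3) + sum2 (v1 m) (p.2 3) + sum2 (v2 m) (p.2 0)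
      + (sum3 (v0 m) (q.1 3) + sum2 (v1 m) (q.2 3) + sum2 (v2 m) (q.2 0))
    ring

lemma hq_smul (r : k) (p : PAR k m) (i : Fin 4) : hq (r • p) i = r • hq p i := by
  fin_cases i
  · show sum3 (v0 m) (r • p.1 0) = _
    rw [sum3_smul]; rfl
  · show sum3 (v0 m) (r • p.1 1) + sum2 (v1 m) (r • p.2 0) = _
    rw [sum3_smul, sum2_smul]
    show _ = r • (sum3 (v0 m) (p.1 1) + sum2 (v1 m) (p.2 0))
    rw [smul_add]
  · show sum3 (v0 m) (r • p.1 2) + sum2 (v1 m) (r • p.2 1) + sum2 (v2 m) (r • p.2 2) = _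
    rw [sum3_smul, sum2_smul, sum2_smul]
    show _ = r • (sum3 (v0 m) (p.1 2) + sum2 (v1 m) (p.2 1) + sum2 (v2 m) (p.2 2))
    rw [smul_add, smul_add]
  · show sum3 (v0 m) (r • p.1 3) + sum2 (v1 m) (r • p.2 3) + sum2 (v2 m) (r • p.2 0) = _
    rw [sum3_smul, sum2_smul, sum2_smul]
    show _ = r • (sum3 (v0 m) (p.1 3) + sum2 (v1 m) (p.2 3) + sum2 (v2 m) (p.2 0))
    rw [smul_add, smul_add]

end Stmt8

namespace Stmt8
variable {k : Type*} [Field k] {m : ℕ}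

lemma XiFun_mem (p : PAR k m) :
    XiFun p ∈ degreeZeroHoms k (Fin (m+4)) (Im k m) := by
  intro mdeg q hq' hhom
  rw [mem_homogeneousSubmodule] at hhom
  by_cases hm2 : 2 ≤ mdeg
  · obtain ⟨a, haH, haq⟩ := exists_homog_rep hq' hm2 hhom
    have h1 : (⟨q, hq'⟩ : ↥(Im k m)) = ⟨∑ i, a i * f4 k m i, by rw [← haq]; exact hq'⟩ :=
      Subtype.ext haq
    rw [h1, XiFun, ofQuad_apply]
    refine Submodule.mem_map.2 ⟨∑ i, a i * hq p i, ?_, rfl⟩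
    rw [mem_homogeneousSubmodule]
    refine IsHomogeneous.sum _ _ _ fun i _ => ?_
    have := (haH i).mul (isHomog_hq p i)
    rwa [Nat.sub_add_cancel hm2] at this
  · have hq0' : q = 0 := eq_zero_of_low hq' (by omega) hhom
    have h1 : (⟨q, hq'⟩ : ↥(Im k m)) = 0 := Subtype.ext hq0'
    rw [h1, map_zero]
    exact Submodule.zero_mem _

noncomputable def PhiL : PAR k m →ₗ[k] ↥(degreeZeroHoms k (Fin (m+4)) (Im k m)) where
  toFun p := ⟨XiFun p, XiFun_mem p⟩
  map_add' p q := by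
    apply Subtype.ext
    show XiFun (p + q) = XiFun p + XiFun q
    apply hom_ext
    intro i
    rw [XiFun_gen, LinearMap.add_apply, XiFun_gen, XiFun_gen, hq_add]
    exact RingHom.map_add _ _ _
  map_smul' r p := by
    apply Subtype.ext
    show XiFun (r • p) = r • XiFun p
    apply hom_ext
    intro i
    rw [XiFun_gen, LinearMap.smul_apply, XiFun_gen, hq_smul,
      ← Ideal.Quotient.mkₐ_eq_mk k, map_smul]

lemma PhiL_inj : Function.Injective (PhiL : PAR k m →ₗ[k] _) := by
  refine (injective_iff_map_eq_zero _).2 fun p hp => ?_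
  have hval : XiFun p = 0 := congrArg Subtype.val hp
  have hmem : ∀ i, hq p i ∈ Im k m := by
    intro i
    rw [← Ideal.Quotient.eq_zero_iff_mem, ← XiFun_gen p i, hval]
    rfl
  have h1 : p.1 = 0 := by
    funext i j
    rw [show (0 : Fin 4 → J3 m → k) i j = 0 from rfl, ← coeff_hq_03 p i j]
    exact coeff_eq_zero_of_mem (hmem i) (fun i' => q4_not_le_03 j i')
  have h2 : p.2 = 0 := by
    funext i j
    fin_cases i
    · show p.2 0 j = 0
      rw [← coeff_hq1_12 p j]
      exact coeff_eq_zero_of_mem (hmem 1) (q4_not_le_12 j)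
    · show p.2 1 j = 0
      rw [← coeff_hq2_12 p j]
      exact coeff_eq_zero_of_mem (hmem 2) (q4_not_le_12 j)
    · show p.2 2 j = 0
      rw [← coeff_hq2_22 p j]
      exact coeff_eq_zero_of_mem (hmem 2) (q4_not_le_22 j)
    · show p.2 3 j = 0
      rw [← coeff_hq3_12 p j]
      exact coeff_eq_zero_of_mem (hmem 3) (q4_not_le_12 j)
  exact Prod.ext h1 h2

lemma f40 : f4 k m 0 = X (v0 m) * X (v0 m) := rfl
lemma f41 : f4 k m 1 = X (v0 m) * X (v1 m) := rfl
lemma f42 : f4 k m 2 = X (v1 m) * X (v1 m) := rfl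
lemma f43 : f4 k m 3 = X (v0 m) * X (v2 m) := rfl

lemma PhiL_surj : Function.Surjective (PhiL : PAR k m →ₗ[k] _) := by
  rintro ⟨φ, hφ⟩
  have hgen : ∀ i : Fin 4, ∃ H : SS k m, H.IsHomogeneous 2
      ∧ Ideal.Quotient.mk (Im k m) H = φ ⟨f4 k m i, f4_mem i⟩ := by
    intro i
    have hf4hom : f4 k m i ∈ homogeneousSubmodule (Fin (m+4)) k 2 := by
      rw [mem_homogeneousSubmodule, f4_eq_monomial]
      exact isHomogeneous_monomial _ (degree_q4 i)
    obtain ⟨H, hH, hval⟩ := hφ 2 (f4 k m i) (f4_mem i) hf4hom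
    exact ⟨H, (mem_homogeneousSubmodule _ _).1 hH, hval⟩
  choose HH hHhom hHval using hgen
  have hrel : ∀ (s t : SS k m) (i i' : Fin 4), s * f4 k m i = t * f4 k m i' →
      s * HH i - t * HH i' ∈ Im k m := by
    intro s t i i' he
    have h1 : s • (⟨f4 k m i, f4_mem i⟩ : ↥(Im k m)) = t • ⟨f4 k m i', f4_mem i'⟩ :=
      Subtype.ext (by simpa [smul_eq_mul] using he)
    have h2 := congrArg φ h1
    rw [map_smul, map_smul, ← hHval, ← hHval] at h2
    have e1 : ∀ (s x : SS k m), s • Ideal.Quotient.mk (Im k m) x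
        = Ideal.Quotient.mk (Im k m) (s * x) := fun s x =>
      (Submodule.Quotient.mk_smul (Im k m) s x).symm
    rw [e1, e1] at h2
    exact Ideal.Quotient.eq.1 h2
  have R1 : X (v1 m) * HH 0 - X (v0 m) * HH 1 ∈ Im k m :=
    hrel _ _ 0 1 (by rw [f40, f41]; ring)
  have R2 : X (v1 m) * HH 1 - X (v0 m) * HH 2 ∈ Im k m :=
    hrel _ _ 1 2 (by rw [f41, f42]; ring)
  have R3 : X (v2 m) * HH 0 - X (v0 m) * HH 3 ∈ Im k m :=
    hrel _ _ 0 3 (by rw [f40, f43]; ring)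
  have R4 : X (v2 m) * HH 1 - X (v1 m) * HH 3 ∈ Im k m :=
    hrel _ _ 1 3 (by rw [f41, f43]; ring)
  refine ⟨((fun i j => coeff (E (v0 m) + E j.1) (HH i)),
    ![fun j => coeff (E (v2 m) + E j.1) (HH 3),
      fun j => coeff (E (v1 m) + E j.1) (HH 2),
      fun j => coeff (E (v2 m) + E j.1) (HH 2),
      fun j => coeff (E (v1 m) + E j.1) (HH 3)]), ?_⟩
  apply Subtype.ext
  show XiFun _ = φ
  apply hom_ext
  intro i
  rw [XiFun_gen, ← hHval i]
  rw [Ideal.Quotient.eq]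
  fin_cases i
  · have h := surj0 (hHhom 0) R1 R3
    show sum3 (v0 m) (fun j => coeff (E (v0 m) + E j.1) (HH 0)) - HH 0 ∈ Im k m
    rw [show sum3 (v0 m) (fun j => coeff (E (v0 m) + E j.1) (HH 0)) - HH 0
      = -(HH 0 - sum3 (v0 m) (fun j => coeff (E (v0 m) + E j.1) (HH 0))) by ring]
    exact Submodule.neg_mem _ h
  · have h := surj1 (hHhom 1) R2 R4
    show sum3 (v0 m) (fun j => coeff (E (v0 m) + E j.1) (HH 1))
      + sum2 (v1 m) (fun j => coeff (E (v2 m) + E j.1) (HH 3)) - HH 1 ∈ Im k m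
    rw [show sum3 (v0 m) (fun j => coeff (E (v0 m) + E j.1) (HH 1))
          + sum2 (v1 m) (fun j => coeff (E (v2 m) + E j.1) (HH 3)) - HH 1
      = -(HH 1 - (sum3 (v0 m) (fun j => coeff (E (v0 m) + E j.1) (HH 1))
          + sum2 (v1 m) (fun j => coeff (E (v2 m) + E j.1) (HH 3)))) by ring]
    exact Submodule.neg_mem _ h
  · have h := surj2 (hHhom 2) R2
    show sum3 (v0 m) (fun j => coeff (E (v0 m) + E j.1) (HH 2))
      + sum2 (v1 m) (fun j => coeff (E (v1 m) + E j.1) (HH 2))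
      + sum2 (v2 m) (fun j => coeff (E (v2 m) + E j.1) (HH 2)) - HH 2 ∈ Im k m
    rw [show sum3 (v0 m) (fun j => coeff (E (v0 m) + E j.1) (HH 2))
          + sum2 (v1 m) (fun j => coeff (E (v1 m) + E j.1) (HH 2))
          + sum2 (v2 m) (fun j => coeff (E (v2 m) + E j.1) (HH 2)) - HH 2
      = -(HH 2 - (sum3 (v0 m) (fun j => coeff (E (v0 m) + E j.1) (HH 2))
          + sum2 (v1 m) (fun j => coeff (E (v1 m) + E j.1) (HH 2))
          + sum2 (v2 m) (fun j => coeff (E (v2 m) + E j.1) (HH 2)))) by ring]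
    exact Submodule.neg_mem _ h
  · have h := surj3 (hHhom 3) R3
    show sum3 (v0 m) (fun j => coeff (E (v0 m) + E j.1) (HH 3))
      + sum2 (v1 m) (fun j => coeff (E (v1 m) + E j.1) (HH 3))
      + sum2 (v2 m) (fun j => coeff (E (v2 m) + E j.1) (HH 3)) - HH 3 ∈ Im k m
    rw [show sum3 (v0 m) (fun j => coeff (E (v0 m) + E j.1) (HH 3))
          + sum2 (v1 m) (fun j => coeff (E (v1 m) + E j.1) (HH 3))
          + sum2 (v2 m) (fun j => coeff (E (v2 m) + E j.1) (HH 3)) - HH 3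
      = -(HH 3 - (sum3 (v0 m) (fun j => coeff (E (v0 m) + E j.1) (HH 3))
          + sum2 (v1 m) (fun j => coeff (E (v1 m) + E j.1) (HH 3))
          + sum2 (v2 m) (fun j => coeff (E (v2 m) + E j.1) (HH 3)))) by ring]
    exact Submodule.neg_mem _ h

end Stmt8

namespace Stmt8
variable {k : Type*} [Field k] {m : ℕ}

def eqv3 : J3 m ≃ Fin (m+1) where
  toFun j := ⟨j.1.val - 3, by have h1 := j.1.isLt; have h2 := j.2; omega⟩
  invFun i := ⟨⟨i.val + 3, by omega⟩, Nat.le_add_left 3 i.val⟩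
  left_inv j := by
    apply Subtype.ext
    apply Fin.ext
    have := j.2
    simp
    omega
  right_inv i := by
    apply Fin.ext
    simp

def eqv2 : J2 m ≃ Fin (m+2) where
  toFun j := ⟨j.1.val - 2, by have h1 := j.1.isLt; have h2 := j.2; omega⟩
  invFun i := ⟨⟨i.val + 2, by omega⟩, Nat.le_add_left 2 i.val⟩
  left_inv j := by
    apply Subtype.ext
    apply Fin.ext
    have := j.2
    simp
    omega
  right_inv i := by
    apply Fin.ext
    simp

lemma card_J3 : Fintype.card (J3 m) = m + 1 := by
  rw [Fintype.card_congr (eqv3 (m := m)), Fintype.card_fin]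

lemma card_J2 : Fintype.card (J2 m) = m + 2 := by
  rw [Fintype.card_congr (eqv2 (m := m)), Fintype.card_fin]

lemma finrank_PAR : Module.finrank k (PAR k m) = 8 * m + 12 := by
  have h3 : Module.finrank k (J3 m → k) = m + 1 := by
    rw [Module.finrank_pi, card_J3]
  have h2 : Module.finrank k (J2 m → k) = m + 2 := by
    rw [Module.finrank_pi, card_J2]
  have hp3 : Module.finrank k (Fin 4 → J3 m → k) = 4 * (m + 1) := by
    rw [Module.finrank_pi_fintype, Finset.sum_congr rfl fun i _ => h3]
    simp [Finset.sum_const, mul_comm]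
  have hp2 : Module.finrank k (Fin 4 → J2 m → k) = 4 * (m + 2) := by
    rw [Module.finrank_pi_fintype, Finset.sum_congr rfl fun i _ => h2]
    simp [Finset.sum_const, mul_comm]
  rw [Module.finrank_prod, hp3, hp2]
  ring

set_option maxHeartbeats 2000000 in
lemma finrank_main :
    Module.finrank k ↥(degreeZeroHoms k (Fin (m+4)) (Im k m)) = 8 * m + 12 := by
  rw [← finrank_PAR (k := k) (m := m)]
  exact (LinearEquiv.ofBijective PhiL ⟨PhiL_inj, PhiL_surj⟩).finrank_eq.symm

end Stmt8


/-- for `I = (x₀², x₀x₁, x₁², x₀x₂)` in `S = k[x₀,…,xₙ]`, `n ≥ 3`,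
`char k = 0`, the degree-zero graded piece of `Hom_S(I/I², S/I)` has `k`-dimension
`8n - 12`. -/
theorem stmt_8 (k : Type*) [Field k] [CharZero k] (n : ℕ) (hn : 3 ≤ n)
    (I : Ideal (MvPolynomial (Fin (n + 1)) k))
    (hI : I = Ideal.span {X (⟨0, by omega⟩ : Fin (n + 1)) ^ 2,
        X (⟨0, by omega⟩ : Fin (n + 1)) * X ⟨1, by omega⟩,
        X (⟨1, by omega⟩ : Fin (n + 1)) ^ 2,
        X (⟨0, by omega⟩ : Fin (n + 1)) * X ⟨2, by omega⟩}) :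
    Module.finrank k (degreeZeroHoms k (Fin (n + 1)) I) = 8 * n - 12 := by
  obtain ⟨m, rfl⟩ : ∃ m, n = m + 3 := ⟨n - 3, by omega⟩
  have hIm : I = Stmt8.Im k m := by
    rw [hI, pow_two, pow_two]
    rfl
  rw [hIm]
  have := Stmt8.finrank_main (k := k) (m := m)
  rw [show degreeZeroHoms k (Fin (m + 3 + 1)) (Stmt8.Im k m)
    = degreeZeroHoms k (Fin (m + 4)) (Stmt8.Im k m) from rfl, this]
  omega
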